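/- arXiv:2512.16474 — 2 statements merged into one kernel-verified Lean document; each statement's English description precedes it below -/
import Mathlib

section
/- Let P be a finite partial interleaving between subsets of T₁ and T₂ with d_P(T₁, T₂) > 0, and let Q be a finite partial interleaving that extends P such that every arrow a of Q satisfies shift_P(a) < d_P(T₁, T₂). Then d_Q(T₁, T₂) ≥ d_P(T₁, T₂). -/
open Set

/-- An abstract merge tree: the topological realization of a finite rooted tree with a
height function that is strictly increasing towards the root (the root sits at height ∞,
so above every point there is a unique ancestor at every height). The ancestor
relation `le` (`x ⪯ y` = `y` is an ancestor of `x`) abstracts the `f`-monotone paths. -/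
structure MergeTree where
  X : Type
  le : X → X → Prop
  f : X → ℝ
  top : TopologicalSpace X
  nonempty : Nonempty X
  le_refl : ∀ x, le x x
  le_trans : ∀ x y z, le x y → le y z → le x z
  le_antisymm : ∀ x y, le x y → le y x → x = y
  f_mono : ∀ x y, le x y → f x ≤ f y
  f_strictMono : ∀ x y, le x y → f x = f y → x = y
  f_cont : @Continuous X ℝ top inferInstance f
  /-- the unique ancestor of `x` at height `h` (junk for `h < f x`). -/
  anc : X → ℝ → X
  le_anc : ∀ x h, f x ≤ h → le x (anc x h)
  f_anc : ∀ x h, f x ≤ h → f (anc x h) = h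
  anc_unique : ∀ x y, le x y → y = anc x (f y)
  /-- rootedness: any two points have a common ancestor. -/
  directed : ∀ x y, ∃ z, le x z ∧ le y z
  /-- tree-ness: the ancestors of a point are totally ordered. -/
  anc_total : ∀ x y z, le x y → le x z → le y z ∨ le z y
  /-- the (finitely many) vertices of the underlying combinatorial tree. -/
  V : Set X
  V_finite : V.Finite

/-- `(S, φ)` is a partial up-map from `S ⊆ T₁` to `T₂`. -/
def IsUpMap (T1 T2 : MergeTree) (S : Set T1.X) (φ : T1.X → T2.X) : Prop :=
  (∀ x ∈ S, T1.f x ≤ T2.f (φ x)) ∧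
  ∀ x1 ∈ S, ∀ x2 ∈ S, T1.le x1 x2 → T2.le (φ x1) (φ x2)

/-- The partial up-map `(S, φ)` extends the partial up-map `(S', φ')`. -/
def UpMapExtends (T1 T2 : MergeTree) (S : Set T1.X) (φ : T1.X → T2.X)
    (S' : Set T1.X) (φ' : T1.X → T2.X) : Prop :=
  S' ⊆ S ∧ ∀ x ∈ S', T2.le (φ' x) (φ x)

/-- The partial up-map `(S, φ)` uses the partial up-map `(S', φ')`. -/
def UpMapUses (T1 T2 : MergeTree) (S : Set T1.X) (φ : T1.X → T2.X)
    (S' : Set T1.X) (φ' : T1.X → T2.X) : Prop :=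
  S' ⊆ S ∧ ∀ x ∈ S', φ x = φ' x

/-- The map `φ↑[δ]`, sending `x` to the ancestor of `φ x` at height
`max (f₁ x + δ) (f₂ (φ x))`. -/
noncomputable def liftMap (T1 T2 : MergeTree) (φ : T1.X → T2.X) (δ : ℝ) : T1.X → T2.X :=
  fun x => T2.anc (φ x) (max (T1.f x + δ) (T2.f (φ x)))

/-- `(S₁, φ, S₂, ψ)` is a partial interleaving between `S₁ ⊆ T₁` and `S₂ ⊆ T₂`. -/
def IsPartialInterleaving (T1 T2 : MergeTree) (S1 : Set T1.X) (φ : T1.X → T2.X)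
    (S2 : Set T2.X) (ψ : T2.X → T1.X) : Prop :=
  IsUpMap T1 T2 S1 φ ∧ IsUpMap T2 T1 S2 ψ ∧
  (∀ x ∈ S1, ∀ y ∈ S2, T2.le (φ x) y → T1.le x (ψ y)) ∧
  (∀ x ∈ S1, ∀ y ∈ S2, T1.le (ψ y) x → T2.le y (φ x))

/-- The partial interleaving `(S1, φ, S2, ψ)` extends `(S1', φ', S2', ψ')`. -/
def InterExtends (T1 T2 : MergeTree) (S1 : Set T1.X) (φ : T1.X → T2.X)
    (S2 : Set T2.X) (ψ : T2.X → T1.X)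
    (S1' : Set T1.X) (φ' : T1.X → T2.X) (S2' : Set T2.X) (ψ' : T2.X → T1.X) : Prop :=
  UpMapExtends T1 T2 S1 φ S1' φ' ∧ UpMapExtends T2 T1 S2 ψ S2' ψ'

/-- The partial interleaving `(S1, φ, S2, ψ)` uses `(S1', φ', S2', ψ')`:
its component maps agree with those of the latter on its domains. -/
def InterUses (T1 T2 : MergeTree) (S1 : Set T1.X) (φ : T1.X → T2.X)
    (S2 : Set T2.X) (ψ : T2.X → T1.X)
    (S1' : Set T1.X) (φ' : T1.X → T2.X) (S2' : Set T2.X) (ψ' : T2.X → T1.X) : Prop :=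
  UpMapUses T1 T2 S1 φ S1' φ' ∧ UpMapUses T2 T1 S2 ψ S2' ψ'

/-- A complete interleaving between `T₁` and `T₂`. -/
def IsInterleaving (T1 T2 : MergeTree) (α : T1.X → T2.X) (β : T2.X → T1.X) : Prop :=
  IsPartialInterleaving T1 T2 univ α univ β

/-- The shift `sup {f₂(φ x) − f₁ x | x ∈ S}` of a partial up-map (valued in `EReal`). -/
noncomputable def mapShift (T1 T2 : MergeTree) (S : Set T1.X) (φ : T1.X → T2.X) : EReal :=
  sSup ((fun x => ((T2.f (φ x) - T1.f x : ℝ) : EReal)) '' S)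

/-- The shift of a partial interleaving. -/
noncomputable def interShift (T1 T2 : MergeTree) (S1 : Set T1.X) (φ : T1.X → T2.X)
    (S2 : Set T2.X) (ψ : T2.X → T1.X) : EReal :=
  max (mapShift T1 T2 S1 φ) (mapShift T2 T1 S2 ψ)

/-- `α` and `β` are δ-compatible maps between `T₁` and `T₂` (Morozov et al.). -/
def Compatible (T1 T2 : MergeTree) (δ : ℝ) (α : T1.X → T2.X) (β : T2.X → T1.X) : Prop :=
  @Continuous T1.X T2.X T1.top T2.top α ∧ @Continuous T2.X T1.X T2.top T1.top β ∧
  (∀ x, T2.f (α x) = T1.f x + δ) ∧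
  (∀ y, T1.f (β y) = T2.f y + δ) ∧
  (∀ x, β (α x) = T1.anc x (T1.f x + 2 * δ)) ∧
  (∀ y, α (β y) = T2.anc y (T2.f y + 2 * δ))

/-- The interleaving distance: the infimum δ for which δ-compatible maps exist. -/
noncomputable def intDist (T1 T2 : MergeTree) : EReal :=
  sInf {d : EReal | ∃ δ : ℝ, 0 ≤ δ ∧ d = (δ : EReal) ∧ ∃ α β, Compatible T1 T2 δ α β}

/-- The set of critical values Δ(T₁, T₂). -/
def DeltaSet (T1 T2 : MergeTree) : Set ℝ :=
  {d | ∃ v ∈ T1.V, ∃ w ∈ T2.V, d = |T1.f v - T2.f w|} ∪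
  {d | ∃ v1 ∈ T1.V, ∃ v2 ∈ T1.V, d = |T1.f v1 - T1.f v2| / 2} ∪
  {d | ∃ w1 ∈ T2.V, ∃ w2 ∈ T2.V, d = |T2.f w1 - T2.f w2| / 2}

/-- The arrow `(x, y)` lies in the fan `F[A_φ]` of the partial up-map `(S, φ)`. -/
def InFan (T1 T2 : MergeTree) (S : Set T1.X) (φ : T1.X → T2.X) (x : T1.X) (y : T2.X) : Prop :=
  T1.f x ≤ T2.f y ∧ ∃ x0 ∈ S, φ x0 = y ∧ T1.le x0 x

open Classical in
/-- The `(S, φ)`-residual shift of an arrow `(x, y)`. -/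
noncomputable def resArrowShift (T1 T2 : MergeTree) (S : Set T1.X) (φ : T1.X → T2.X)
    (x : T1.X) (y : T2.X) : ℝ :=
  if InFan T1 T2 S φ x y then 0 else T2.f y - T1.f x

/-- The `(S, φ)`-residual shift of a partial up-map `(S', φ')`. -/
noncomputable def resMapShift (T1 T2 : MergeTree) (S : Set T1.X) (φ : T1.X → T2.X)
    (S' : Set T1.X) (φ' : T1.X → T2.X) : EReal :=
  sSup ((fun x => ((resArrowShift T1 T2 S φ x (φ' x) : ℝ) : EReal)) '' S')

/-- The `P`-residual shift of a partial interleaving `P' = (S1', φ', S2', ψ')`,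
where `P = (S1, φ, S2, ψ)`. -/
noncomputable def resInterShift (T1 T2 : MergeTree)
    (S1 : Set T1.X) (φ : T1.X → T2.X) (S2 : Set T2.X) (ψ : T2.X → T1.X)
    (S1' : Set T1.X) (φ' : T1.X → T2.X) (S2' : Set T2.X) (ψ' : T2.X → T1.X) : EReal :=
  max (resMapShift T1 T2 S1 φ S1' φ') (resMapShift T2 T1 S2 ψ S2' ψ')

/-- `(α, β)` is a complete interleaving extending the partial interleaving `(S1, φ, S2, ψ)`. -/
def IsCompleteExtension (T1 T2 : MergeTree)
    (S1 : Set T1.X) (φ : T1.X → T2.X) (S2 : Set T2.X) (ψ : T2.X → T1.X)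
    (α : T1.X → T2.X) (β : T2.X → T1.X) : Prop :=
  IsInterleaving T1 T2 α β ∧ InterExtends T1 T2 univ α univ β S1 φ S2 ψ

/-- The `P`-residual interleaving distance `d_P(T₁, T₂)`. -/
noncomputable def resDist (T1 T2 : MergeTree)
    (S1 : Set T1.X) (φ : T1.X → T2.X) (S2 : Set T2.X) (ψ : T2.X → T1.X) : EReal :=
  sInf {d : EReal | ∃ α β, IsCompleteExtension T1 T2 S1 φ S2 ψ α β ∧
    d = resInterShift T1 T2 S1 φ S2 ψ univ α univ β}

/-- The `P`-critical points of `T₁`. -/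
def critPts1 (T1 T2 : MergeTree) (S1 : Set T1.X) (S2 : Set T2.X) (ψ : T2.X → T1.X) :
    Set T1.X :=
  T1.V ∪ S1 ∪ ψ '' S2

/-- The `P`-critical points of `T₂`. -/
def critPts2 (T1 T2 : MergeTree) (S1 : Set T1.X) (φ : T1.X → T2.X) (S2 : Set T2.X) :
    Set T2.X :=
  T2.V ∪ S2 ∪ φ '' S1

/-- The set of `P`-critical values `Δ[P](T₁, T₂)`. -/
def DeltaPSet (T1 T2 : MergeTree)
    (S1 : Set T1.X) (φ : T1.X → T2.X) (S2 : Set T2.X) (ψ : T2.X → T1.X) : Set ℝ :=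
  {d | ∃ v ∈ critPts1 T1 T2 S1 S2 ψ, ∃ w ∈ critPts2 T1 T2 S1 φ S2, d = |T1.f v - T2.f w|} ∪
  {d | ∃ v1 ∈ T1.V, ∃ v2 ∈ T1.V, d = |T1.f v1 - T1.f v2| / 2} ∪
  {d | ∃ w1 ∈ T2.V, ∃ w2 ∈ T2.V, d = |T2.f w1 - T2.f w2| / 2}

/-- The partial interleaving `(S1', φ', S2', ψ')` uses a `P`-critical pair whose
corresponding critical value is `d`, where `P = (S1, φ, S2, ψ)` supplies the critical
points. The four disjuncts are: arrow critical pairs in either direction, and zigzag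
critical pairs on either tree. -/
def UsesCritPair (T1 T2 : MergeTree)
    (S1 : Set T1.X) (φ : T1.X → T2.X) (S2 : Set T2.X) (ψ : T2.X → T1.X)
    (S1' : Set T1.X) (φ' : T1.X → T2.X) (S2' : Set T2.X) (ψ' : T2.X → T1.X) (d : ℝ) : Prop :=
  (∃ v ∈ critPts1 T1 T2 S1 S2 ψ, ∃ w ∈ critPts2 T1 T2 S1 φ S2,
      T1.f v ≤ T2.f w ∧ d = T2.f w - T1.f v ∧ v ∈ S1' ∧ φ' v = w) ∨
  (∃ w ∈ critPts2 T1 T2 S1 φ S2, ∃ v ∈ critPts1 T1 T2 S1 S2 ψ,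
      T2.f w ≤ T1.f v ∧ d = T1.f v - T2.f w ∧ w ∈ S2' ∧ ψ' w = v) ∨
  (∃ v1 ∈ T1.V, ∃ v2 ∈ T1.V, d = (T1.f v2 - T1.f v1) / 2 ∧
      ∃ y, T2.f y = T1.f v1 + d ∧ v1 ∈ S1' ∧ φ' v1 = y ∧ y ∈ S2' ∧ ψ' y = v2) ∨
  (∃ w1 ∈ T2.V, ∃ w2 ∈ T2.V, d = (T2.f w2 - T2.f w1) / 2 ∧
      ∃ x, T1.f x = T2.f w1 + d ∧ w1 ∈ S2' ∧ ψ' w1 = x ∧ x ∈ S1' ∧ φ' x = w2)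

/-- `Q = (SQ1, φQ, SQ2, ψQ)` is a `P`-augmentation, `P = (S1, φ, S2, ψ)`. -/
def IsAugmentation (T1 T2 : MergeTree)
    (S1 : Set T1.X) (φ : T1.X → T2.X) (S2 : Set T2.X) (ψ : T2.X → T1.X)
    (SQ1 : Set T1.X) (φQ : T1.X → T2.X) (SQ2 : Set T2.X) (ψQ : T2.X → T1.X) : Prop :=
  IsPartialInterleaving T1 T2 SQ1 φQ SQ2 ψQ ∧
  InterExtends T1 T2 SQ1 φQ SQ2 ψQ S1 φ S2 ψ ∧
  resInterShift T1 T2 S1 φ S2 ψ SQ1 φQ SQ2 ψQ ≤ resDist T1 T2 S1 φ S2 ψ ∧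
  resDist T1 T2 SQ1 φQ SQ2 ψQ < resDist T1 T2 S1 φ S2 ψ

/-- Two partial interleavings are the same (same domains, agreeing maps on them). -/
def SameInter (T1 T2 : MergeTree)
    (S1 : Set T1.X) (φ : T1.X → T2.X) (S2 : Set T2.X) (ψ : T2.X → T1.X)
    (S1' : Set T1.X) (φ' : T1.X → T2.X) (S2' : Set T2.X) (ψ' : T2.X → T1.X) : Prop :=
  S1 = S1' ∧ S2 = S2' ∧ (∀ x ∈ S1, φ x = φ' x) ∧ (∀ y ∈ S2, ψ y = ψ' y)

/-- `Q` is a minimal `P`-augmentation: it does not (properly) extend any other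
`P`-augmentation. -/
def IsMinimalAugmentation (T1 T2 : MergeTree)
    (S1 : Set T1.X) (φ : T1.X → T2.X) (S2 : Set T2.X) (ψ : T2.X → T1.X)
    (SQ1 : Set T1.X) (φQ : T1.X → T2.X) (SQ2 : Set T2.X) (ψQ : T2.X → T1.X) : Prop :=
  IsAugmentation T1 T2 S1 φ S2 ψ SQ1 φQ SQ2 ψQ ∧
  ∀ SR1 φR SR2 ψR, IsAugmentation T1 T2 S1 φ S2 ψ SR1 φR SR2 ψR →
    InterExtends T1 T2 SQ1 φQ SQ2 ψQ SR1 φR SR2 ψR →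
    SameInter T1 T2 SQ1 φQ SQ2 ψQ SR1 φR SR2 ψR

/-- Domain of the relative difference of two partial maps. -/
def relDiffDom {X Y : Type} (SQ : Set X) (φQ : X → Y) (S : Set X) (φ : X → Y) : Set X :=
  SQ \ {x | x ∈ S ∧ φQ x = φ x}

/-- `P = (S1, φ, S2, ψ)` is dominant: the shift of each of its arrows strictly exceeds
`d_P(T₁, T₂)`. -/
def DominantInter (T1 T2 : MergeTree)
    (S1 : Set T1.X) (φ : T1.X → T2.X) (S2 : Set T2.X) (ψ : T2.X → T1.X) : Prop :=
  (∀ x ∈ S1, resDist T1 T2 S1 φ S2 ψ < ((T2.f (φ x) - T1.f x : ℝ) : EReal)) ∧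
  (∀ y ∈ S2, resDist T1 T2 S1 φ S2 ψ < ((T1.f (ψ y) - T2.f y : ℝ) : EReal))

/-- A partial interleaving is locally correct: for every restriction `R` of it,
`d_R(T₁, T₂) ≥ shift_R(P)`. -/
def LocallyCorrectPartial (T1 T2 : MergeTree)
    (S1 : Set T1.X) (φ : T1.X → T2.X) (S2 : Set T2.X) (ψ : T2.X → T1.X) : Prop :=
  ∀ S1' ⊆ S1, ∀ S2' ⊆ S2,
    resInterShift T1 T2 S1' φ S2' ψ S1 φ S2 ψ ≤ resDist T1 T2 S1' φ S2' ψ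

/-- A complete interleaving `(α, β)` is locally correct: for every restriction `R` of it,
`d_R(T₁, T₂) = shift_R(I)`. -/
def LocallyCorrect (T1 T2 : MergeTree) (α : T1.X → T2.X) (β : T2.X → T1.X) : Prop :=
  ∀ S1' : Set T1.X, ∀ S2' : Set T2.X,
    resDist T1 T2 S1' α S2' β = resInterShift T1 T2 S1' α S2' β univ α univ β

lemma resArrowShift_nonneg (T1 T2 : MergeTree) (S : Set T1.X) (φ : T1.X → T2.X)
    (x : T1.X) (y : T2.X) (h : T1.f x ≤ T2.f y) :
    0 ≤ resArrowShift T1 T2 S φ x y := by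
  unfold resArrowShift
  split
  · exact le_refl 0
  · linarith

lemma finite_sup_lt {X : Type*} (s : Set X) (hs : s.Finite) (g : X → EReal) (d : EReal)
    (hd : ⊥ < d) (h : ∀ x ∈ s, g x < d) : sSup (g '' s) < d := by
  rcases s.eq_empty_or_nonempty with rfl | hne
  · simpa using hd
  · have hmem : sSup (g '' s) ∈ g '' s := (hne.image g).csSup_mem (hs.image g)
    obtain ⟨x, hx, hxe⟩ := hmem
    rw [← hxe]
    exact h x hx

lemma aux_resMap_le (T1 T2 : MergeTree) (S1 : Set T1.X) (φ : T1.X → T2.X)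
    (SQ1 : Set T1.X) (φQ : T1.X → T2.X) (α : T1.X → T2.X)
    (hα : ∀ x, T1.f x ≤ T2.f (α x)) :
    resMapShift T1 T2 S1 φ univ α ≤
      max (resMapShift T1 T2 SQ1 φQ univ α) (resMapShift T1 T2 S1 φ SQ1 φQ) := by
  apply sSup_le
  rintro e ⟨x, -, rfl⟩
  show ((resArrowShift T1 T2 S1 φ x (α x) : ℝ) : EReal) ≤ _
  by_cases h1 : InFan T1 T2 S1 φ x (α x)
  · -- residual shift is 0; bounded by the first component, which is nonnegative
    have h0 : resArrowShift T1 T2 S1 φ x (α x) = 0 := by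
      unfold resArrowShift; rw [if_pos h1]
    rw [h0]
    have hle : ((resArrowShift T1 T2 SQ1 φQ x (α x) : ℝ) : EReal) ≤
        resMapShift T1 T2 SQ1 φQ univ α :=
      le_sSup ⟨x, mem_univ x, rfl⟩
    have h0' : (0 : EReal) ≤ ((resArrowShift T1 T2 SQ1 φQ x (α x) : ℝ) : EReal) := by
      exact_mod_cast resArrowShift_nonneg T1 T2 SQ1 φQ x (α x) (hα x)
    exact le_max_of_le_left (h0'.trans hle)
  · have hval : resArrowShift T1 T2 S1 φ x (α x) = T2.f (α x) - T1.f x := by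
      unfold resArrowShift; rw [if_neg h1]
    rw [hval]
    by_cases h2 : InFan T1 T2 SQ1 φQ x (α x)
    · obtain ⟨hf, x0, hx0, hφQ, hle0⟩ := h2
      have hnot : ¬ InFan T1 T2 S1 φ x0 (φQ x0) := by
        rintro ⟨-, x1, hx1, hφ1, hle1⟩
        exact h1 ⟨hf, x1, hx1, by rw [hφ1, hφQ], T1.le_trans _ _ _ hle1 hle0⟩
      have hval0 : resArrowShift T1 T2 S1 φ x0 (φQ x0) = T2.f (φQ x0) - T1.f x0 := by
        unfold resArrowShift; rw [if_neg hnot]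
      have hmono : T2.f (α x) - T1.f x ≤ T2.f (φQ x0) - T1.f x0 := by
        have := T1.f_mono _ _ hle0
        rw [hφQ]; linarith
      have hle2 : ((resArrowShift T1 T2 S1 φ x0 (φQ x0) : ℝ) : EReal) ≤
          resMapShift T1 T2 S1 φ SQ1 φQ := le_sSup ⟨x0, hx0, rfl⟩
      refine le_max_of_le_right (le_trans ?_ hle2)
      rw [hval0]
      exact_mod_cast hmono
    · have hvalQ : resArrowShift T1 T2 SQ1 φQ x (α x) = T2.f (α x) - T1.f x := by
        unfold resArrowShift; rw [if_neg h2]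
      have hle2 : ((resArrowShift T1 T2 SQ1 φQ x (α x) : ℝ) : EReal) ≤
          resMapShift T1 T2 SQ1 φQ univ α := le_sSup ⟨x, mem_univ x, rfl⟩
      rw [hvalQ] at hle2
      exact le_max_of_le_left hle2

/-- If P is finite with d_P(T₁,T₂) > 0 and Q is a finite partial
interleaving extending P all of whose arrows have P-residual shift strictly less than
d_P(T₁,T₂), then d_Q(T₁,T₂) ≥ d_P(T₁,T₂). -/
theorem resDist_ge_of_small_resArrowShift (T1 T2 : MergeTree)
    (S1 : Set T1.X) (φ : T1.X → T2.X) (S2 : Set T2.X) (ψ : T2.X → T1.X)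
    (hP : IsPartialInterleaving T1 T2 S1 φ S2 ψ)
    (hfin : S1.Finite ∧ S2.Finite)
    (hpos : 0 < resDist T1 T2 S1 φ S2 ψ)
    (SQ1 : Set T1.X) (φQ : T1.X → T2.X) (SQ2 : Set T2.X) (ψQ : T2.X → T1.X)
    (hQ : IsPartialInterleaving T1 T2 SQ1 φQ SQ2 ψQ)
    (hQfin : SQ1.Finite ∧ SQ2.Finite)
    (hExt : InterExtends T1 T2 SQ1 φQ SQ2 ψQ S1 φ S2 ψ)
    (harr1 : ∀ x ∈ SQ1,
      ((resArrowShift T1 T2 S1 φ x (φQ x) : ℝ) : EReal) < resDist T1 T2 S1 φ S2 ψ)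
    (harr2 : ∀ y ∈ SQ2,
      ((resArrowShift T2 T1 S2 ψ y (ψQ y) : ℝ) : EReal) < resDist T1 T2 S1 φ S2 ψ) :
    resDist T1 T2 S1 φ S2 ψ ≤ resDist T1 T2 SQ1 φQ SQ2 ψQ := by
  set d := resDist T1 T2 S1 φ S2 ψ with hd_def
  apply le_sInf
  rintro e ⟨α, β, ⟨hI, hIext⟩, rfl⟩
  -- (α, β) is also a complete P-extension
  have hPE : IsCompleteExtension T1 T2 S1 φ S2 ψ α β := by
    refine ⟨hI, ⟨⟨subset_univ _, fun x hx => ?_⟩, ⟨subset_univ _, fun y hy => ?_⟩⟩⟩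
    · exact T2.le_trans _ _ _ (hExt.1.2 x hx) (hIext.1.2 x (hExt.1.1 hx))
    · exact T1.le_trans _ _ _ (hExt.2.2 y hy) (hIext.2.2 y (hExt.2.1 hy))
  have hd_le : d ≤ resInterShift T1 T2 S1 φ S2 ψ univ α univ β :=
    sInf_le ⟨α, β, hPE, rfl⟩
  set eQ := resInterShift T1 T2 SQ1 φQ SQ2 ψQ univ α univ β with heQ
  set m := resInterShift T1 T2 S1 φ S2 ψ SQ1 φQ SQ2 ψQ with hm_def
  -- shift_P(I) ≤ max eQ m
  have h1 : resInterShift T1 T2 S1 φ S2 ψ univ α univ β ≤ max eQ m := by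
    have hA := aux_resMap_le T1 T2 S1 φ SQ1 φQ α (fun x => (hI.1.1 x (mem_univ x)))
    have hB := aux_resMap_le T2 T1 S2 ψ SQ2 ψQ β (fun y => (hI.2.1.1 y (mem_univ y)))
    refine max_le (hA.trans (max_le ?_ ?_)) (hB.trans (max_le ?_ ?_))
    · exact le_max_of_le_left (le_max_left _ _)
    · exact le_max_of_le_right (le_max_left _ _)
    · exact le_max_of_le_left (le_max_right _ _)
    · exact le_max_of_le_right (le_max_right _ _)
  -- m < d
  have hm : m < d := by
    have hbot' : (⊥ : EReal) < d := lt_of_le_of_lt bot_le hpos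
    refine max_lt ?_ ?_
    · exact finite_sup_lt SQ1 hQfin.1 _ d hbot' (fun x hx => harr1 x hx)
    · exact finite_sup_lt SQ2 hQfin.2 _ d hbot' (fun y hy => harr2 y hy)
  by_contra h
  push_neg at h
  exact absurd (hd_le.trans h1) (not_le.2 (max_lt h hm))
end

section
/- Let P be a dominant, finite partial interleaving between subsets of T₁ and T₂ with d_P(T₁, T₂) > 0. Then every minimal P-augmentation Q satisfies: (i) Q uses P, and (ii) every arrow a of the relative difference Q ∖ P has shift(a) = d_P(T₁, T₂). -/
open Set

section AuxLemmas

open Classical in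
lemma MT.ras_def (A B : MergeTree) (S : Set A.X) (f : A.X → B.X) (x : A.X) (y : B.X) :
    resArrowShift A B S f x y = if InFan A B S f x y then 0 else B.f y - A.f x := rfl

lemma MT.pi_swap {A B : MergeTree} {S1 : Set A.X} {f : A.X → B.X} {S2 : Set B.X} {g : B.X → A.X}
    (h : IsPartialInterleaving A B S1 f S2 g) : IsPartialInterleaving B A S2 g S1 f :=
  ⟨h.2.1, h.1, fun y hy x hx hle => h.2.2.2 x hx y hy hle,
    fun y hy x hx hle => h.2.2.1 x hx y hy hle⟩

lemma MT.ris_swap (A B : MergeTree) (S1 : Set A.X) (f : A.X → B.X) (S2 : Set B.X) (g : B.X → A.X)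
    (S1' : Set A.X) (f' : A.X → B.X) (S2' : Set B.X) (g' : B.X → A.X) :
    resInterShift B A S2 g S1 f S2' g' S1' f' = resInterShift A B S1 f S2 g S1' f' S2' g' :=
  max_comm _ _

lemma MT.resDist_le_swap (A B : MergeTree) (S1 : Set A.X) (f : A.X → B.X) (S2 : Set B.X)
    (g : B.X → A.X) : resDist B A S2 g S1 f ≤ resDist A B S1 f S2 g := by
  refine le_sInf ?_
  rintro d ⟨α, β, ⟨hI, hE⟩, rfl⟩
  exact sInf_le ⟨β, α, ⟨MT.pi_swap hI, hE.2, hE.1⟩, (MT.ris_swap A B S1 f S2 g univ α univ β).symm⟩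

lemma MT.resDist_swap (A B : MergeTree) (S1 : Set A.X) (f : A.X → B.X) (S2 : Set B.X)
    (g : B.X → A.X) : resDist B A S2 g S1 f = resDist A B S1 f S2 g :=
  le_antisymm (MT.resDist_le_swap A B S1 f S2 g) (MT.resDist_le_swap B A S2 g S1 f)

/-- Key lemma for part (i): any extension of a dominant `P` with `P`-residual shift at most
`d` agrees with `P` on its domain. -/
lemma MT.uses_of_ext {A B : MergeTree} {S1 : Set A.X} {f : A.X → B.X} {S2 : Set B.X}
    {g : B.X → A.X} {SQ1 : Set A.X} {fQ : A.X → B.X} {SQ2 : Set B.X} {gQ : B.X → A.X}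
    {d : EReal}
    (hP : IsPartialInterleaving A B S1 f S2 g)
    (hdom : ∀ x ∈ S1, d < ((B.f (f x) - A.f x : ℝ) : EReal))
    (hext : InterExtends A B SQ1 fQ SQ2 gQ S1 f S2 g)
    (hsh : resInterShift A B S1 f S2 g SQ1 fQ SQ2 gQ ≤ d) :
    ∀ x ∈ S1, fQ x = f x := by
  intro x hx
  have hxQ : x ∈ SQ1 := hext.1.1 hx
  have harr0 : ((resArrowShift A B S1 f x (fQ x) : ℝ) : EReal) ≤
      resMapShift A B S1 f SQ1 fQ := le_sSup ⟨x, hxQ, rfl⟩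
  have harr : ((resArrowShift A B S1 f x (fQ x) : ℝ) : EReal) ≤ d :=
    le_trans (le_trans harr0 (le_max_left _ _)) hsh
  by_cases hf : InFan A B S1 f x (fQ x)
  · obtain ⟨-, x0, hx0, hf0, hle0⟩ := hf
    have h1 : B.le (f x0) (f x) := hP.1.2 x0 hx0 x hx hle0
    have h2 : B.le (f x) (f x0) := by rw [hf0]; exact hext.1.2 x hx
    rw [← hf0]
    exact B.le_antisymm _ _ h1 h2
  · rw [MT.ras_def, if_neg hf] at harr
    have hle : B.f (f x) ≤ B.f (fQ x) := B.f_mono _ _ (hext.1.2 x hx)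
    have hlt : d < ((B.f (fQ x) - A.f x : ℝ) : EReal) :=
      lt_of_lt_of_le (hdom x hx) (EReal.coe_le_coe_iff.2 (by linarith))
    exact absurd harr (not_le.2 hlt)

/-- Key lemma for part (ii): granted the ability to remove a point of
`dom(fQ) ∖ dom(f)` (supplied by minimality), every arrow of the difference has shift
exactly `d`. -/
lemma MT.shift_eq_of_min {A B : MergeTree} {S1 : Set A.X} {f : A.X → B.X} {S2 : Set B.X}
    {g : B.X → A.X} {SQ1 : Set A.X} {fQ : A.X → B.X} {SQ2 : Set B.X} {gQ : B.X → A.X}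
    {d : EReal}
    (hext : InterExtends A B SQ1 fQ SQ2 gQ S1 f S2 g)
    (hsh : resInterShift A B S1 f S2 g SQ1 fQ SQ2 gQ ≤ d)
    (hlt : resDist A B SQ1 fQ SQ2 gQ < d)
    (huse : ∀ x ∈ S1, fQ x = f x)
    (hrem : ∀ x ∈ SQ1, x ∉ S1 → resDist A B (SQ1 \ {x}) fQ SQ2 gQ < d → False) :
    ∀ x ∈ relDiffDom SQ1 fQ S1 f, ((B.f (fQ x) - A.f x : ℝ) : EReal) = d := by
  intro x hx
  obtain ⟨hxQ, hx2⟩ := hx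
  have hxS1 : x ∉ S1 := fun h => hx2 ⟨h, huse x h⟩
  obtain ⟨dI, ⟨α, β, hce, rfl⟩, hdIlt⟩ := sInf_lt_iff.mp hlt
  have hαf : ∀ x', A.f x' ≤ B.f (α x') := fun x' => hce.1.1.1 x' (mem_univ _)
  have hceR : IsCompleteExtension A B (SQ1 \ {x}) fQ SQ2 gQ α β :=
    ⟨hce.1, ⟨⟨subset_univ _, fun x' hx' => hce.2.1.2 x' hx'.1⟩, hce.2.2⟩⟩
  have hRle : resDist A B (SQ1 \ {x}) fQ SQ2 gQ ≤
      resInterShift A B (SQ1 \ {x}) fQ SQ2 gQ univ α univ β := sInf_le ⟨α, β, hceR, rfl⟩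
  have hA : resMapShift A B SQ1 fQ univ α < d := lt_of_le_of_lt (le_max_left _ _) hdIlt
  have hB : resMapShift B A SQ2 gQ univ β < d := lt_of_le_of_lt (le_max_right _ _) hdIlt
  have hQle : ∀ x', ((resArrowShift A B SQ1 fQ x' (α x') : ℝ) : EReal) ≤
      resMapShift A B SQ1 fQ univ α := fun x' => le_sSup ⟨x', mem_univ _, rfl⟩
  have hQnn : ∀ x', (0 : ℝ) ≤ resArrowShift A B SQ1 fQ x' (α x') := by
    intro x'
    rw [MT.ras_def]
    split
    · exact le_refl 0
    · exact sub_nonneg.2 (hαf x')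
  rcases lt_trichotomy (((B.f (fQ x) - A.f x : ℝ) : EReal)) d with hc | hc | hc
  · -- shift < d : remove x; new out-of-fan arrows are bounded by the removed shift
    exfalso
    have hkey : ∀ x', ((resArrowShift A B (SQ1 \ {x}) fQ x' (α x') : ℝ) : EReal) ≤
        max (resMapShift A B SQ1 fQ univ α) (((B.f (fQ x) - A.f x : ℝ) : EReal)) := by
      intro x'
      by_cases hfR : InFan A B (SQ1 \ {x}) fQ x' (α x')
      · rw [MT.ras_def, if_pos hfR]
        refine le_trans (le_trans ?_ (hQle x')) (le_max_left _ _)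
        exact_mod_cast hQnn x'
      · rw [MT.ras_def, if_neg hfR]
        by_cases hfQ : InFan A B SQ1 fQ x' (α x')
        · obtain ⟨hfy, x1, hx1, hf1, hle1⟩ := hfQ
          by_cases hx1x : x1 = x
          · subst hx1x
            refine le_trans ?_ (le_max_right _ _)
            refine EReal.coe_le_coe_iff.2 ?_
            rw [← hf1]
            have := A.f_mono _ _ hle1
            linarith
          · exact absurd ⟨hfy, x1, ⟨hx1, fun h => hx1x h⟩, hf1, hle1⟩ hfR
        · refine le_trans ?_ (le_max_left _ _)
          have heq : resArrowShift A B SQ1 fQ x' (α x') = B.f (α x') - A.f x' := by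
            rw [MT.ras_def, if_neg hfQ]
          rw [← heq]
          exact hQle x'
    have hbound : resInterShift A B (SQ1 \ {x}) fQ SQ2 gQ univ α univ β < d := by
      refine max_lt (lt_of_le_of_lt ?_ (max_lt hA hc)) hB
      refine sSup_le ?_
      rintro e ⟨x', -, rfl⟩
      exact hkey x'
    exact hrem x hxQ hxS1 (lt_of_le_of_lt hRle hbound)
  · exact hc
  · -- shift > d : the arrow must be in P's fan; use the fan witness after removal
    exfalso
    have harr0 : ((resArrowShift A B S1 f x (fQ x) : ℝ) : EReal) ≤
        resMapShift A B S1 f SQ1 fQ := le_sSup ⟨x, hxQ, rfl⟩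
    have harr : ((resArrowShift A B S1 f x (fQ x) : ℝ) : EReal) ≤ d :=
      le_trans (le_trans harr0 (le_max_left _ _)) hsh
    by_cases hfP : InFan A B S1 f x (fQ x)
    swap
    · rw [MT.ras_def, if_neg hfP] at harr
      exact absurd harr (not_le.2 hc)
    obtain ⟨hfy, x0, hx0, hf0, hle0⟩ := hfP
    have hfQ0 : fQ x0 = fQ x := (huse x0 hx0).trans hf0
    have hx0ne : x0 ≠ x := fun h => hxS1 (h ▸ hx0)
    have hx0Q : x0 ∈ SQ1 := hext.1.1 hx0
    have hkey : ∀ x', ((resArrowShift A B (SQ1 \ {x}) fQ x' (α x') : ℝ) : EReal) ≤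
        resMapShift A B SQ1 fQ univ α := by
      intro x'
      by_cases hfR : InFan A B (SQ1 \ {x}) fQ x' (α x')
      · rw [MT.ras_def, if_pos hfR]
        refine le_trans ?_ (hQle x')
        exact_mod_cast hQnn x'
      · have hfQ : ¬ InFan A B SQ1 fQ x' (α x') := by
          rintro ⟨hfy', x1, hx1, hf1, hle1⟩
          by_cases hx1x : x1 = x
          · subst hx1x
            exact hfR ⟨hfy', x0, ⟨hx0Q, fun h => hx0ne h⟩, hfQ0.trans hf1,
              A.le_trans _ _ _ hle0 hle1⟩
          · exact hfR ⟨hfy', x1, ⟨hx1, fun h => hx1x h⟩, hf1, hle1⟩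
        have heq : resArrowShift A B (SQ1 \ {x}) fQ x' (α x')
            = resArrowShift A B SQ1 fQ x' (α x') := by
          rw [MT.ras_def, MT.ras_def, if_neg hfR, if_neg hfQ]
        rw [heq]
        exact hQle x'
    have hbound : resInterShift A B (SQ1 \ {x}) fQ SQ2 gQ univ α univ β < d := by
      refine max_lt (lt_of_le_of_lt ?_ hA) hB
      refine sSup_le ?_
      rintro e ⟨x', -, rfl⟩
      exact hkey x'
    exact hrem x hxQ hxS1 (lt_of_le_of_lt hRle hbound)

end AuxLemmas

/-- If P is dominant and finite with d_P(T₁,T₂) > 0, then any minimal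
P-augmentation Q (i) uses P and (ii) every arrow of Q ∖ P has shift exactly d_P(T₁,T₂). -/
theorem minimal_augmentation_uses_and_shift_eq (T1 T2 : MergeTree)
    (S1 : Set T1.X) (φ : T1.X → T2.X) (S2 : Set T2.X) (ψ : T2.X → T1.X)
    (hP : IsPartialInterleaving T1 T2 S1 φ S2 ψ)
    (hfin : S1.Finite ∧ S2.Finite)
    (hpos : 0 < resDist T1 T2 S1 φ S2 ψ)
    (hdom : DominantInter T1 T2 S1 φ S2 ψ)
    (SQ1 : Set T1.X) (φQ : T1.X → T2.X) (SQ2 : Set T2.X) (ψQ : T2.X → T1.X)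
    (hQ : IsMinimalAugmentation T1 T2 S1 φ S2 ψ SQ1 φQ SQ2 ψQ) :
    InterUses T1 T2 SQ1 φQ SQ2 ψQ S1 φ S2 ψ ∧
    (∀ x ∈ relDiffDom SQ1 φQ S1 φ,
      ((T2.f (φQ x) - T1.f x : ℝ) : EReal) = resDist T1 T2 S1 φ S2 ψ) ∧
    (∀ y ∈ relDiffDom SQ2 ψQ S2 ψ,
      ((T1.f (ψQ y) - T2.f y : ℝ) : EReal) = resDist T1 T2 S1 φ S2 ψ) := by
  obtain ⟨⟨hQpi, hQext, hQsh, hQlt⟩, hmin⟩ := hQ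
  set d := resDist T1 T2 S1 φ S2 ψ with hd
  have huse1 : ∀ x ∈ S1, φQ x = φ x := MT.uses_of_ext hP hdom.1 hQext hQsh
  have hextsw : InterExtends T2 T1 SQ2 ψQ SQ1 φQ S2 ψ S1 φ := ⟨hQext.2, hQext.1⟩
  have hshsw : resInterShift T2 T1 S2 ψ S1 φ SQ2 ψQ SQ1 φQ ≤ d := by
    rw [MT.ris_swap]; exact hQsh
  have huse2 : ∀ y ∈ S2, ψQ y = ψ y := MT.uses_of_ext (MT.pi_swap hP) hdom.2 hextsw hshsw
  have hrem1 : ∀ x ∈ SQ1, x ∉ S1 → resDist T1 T2 (SQ1 \ {x}) φQ SQ2 ψQ < d → False := by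
    intro x hxQ hxS1 hRd
    have Rpi : IsPartialInterleaving T1 T2 (SQ1 \ {x}) φQ SQ2 ψQ :=
      ⟨⟨fun a ha => hQpi.1.1 a ha.1, fun a ha b hb h => hQpi.1.2 a ha.1 b hb.1 h⟩,
        hQpi.2.1,
        fun a ha y hy h => hQpi.2.2.1 a ha.1 y hy h,
        fun a ha y hy h => hQpi.2.2.2 a ha.1 y hy h⟩
    have Rext : InterExtends T1 T2 (SQ1 \ {x}) φQ SQ2 ψQ S1 φ S2 ψ :=
      ⟨⟨fun a ha => ⟨hQext.1.1 ha, fun h => hxS1 (mem_singleton_iff.mp h ▸ ha)⟩,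
        hQext.1.2⟩, hQext.2⟩
    have Rsh : resInterShift T1 T2 S1 φ S2 ψ (SQ1 \ {x}) φQ SQ2 ψQ ≤ d :=
      le_trans (max_le_max (sSup_le_sSup (image_mono diff_subset)) le_rfl) hQsh
    have hsame := hmin _ _ _ _ ⟨Rpi, Rext, Rsh, hRd⟩
      ⟨⟨diff_subset, fun a _ => T2.le_refl _⟩, ⟨subset_rfl, fun a _ => T1.le_refl _⟩⟩
    have hmem : x ∈ SQ1 \ {x} := hsame.1 ▸ hxQ
    exact hmem.2 rfl
  have hrem2 : ∀ y ∈ SQ2, y ∉ S2 → resDist T2 T1 (SQ2 \ {y}) ψQ SQ1 φQ < d → False := by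
    intro y hyQ hyS2 hRd'
    have hRd : resDist T1 T2 SQ1 φQ (SQ2 \ {y}) ψQ < d := by
      rw [← MT.resDist_swap]; exact hRd'
    have Rpi : IsPartialInterleaving T1 T2 SQ1 φQ (SQ2 \ {y}) ψQ :=
      ⟨hQpi.1,
        ⟨fun b hb => hQpi.2.1.1 b hb.1, fun a ha b hb h => hQpi.2.1.2 a ha.1 b hb.1 h⟩,
        fun a ha b hb h => hQpi.2.2.1 a ha b hb.1 h,
        fun a ha b hb h => hQpi.2.2.2 a ha b hb.1 h⟩
    have Rext : InterExtends T1 T2 SQ1 φQ (SQ2 \ {y}) ψQ S1 φ S2 ψ :=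
      ⟨hQext.1, ⟨fun b hb => ⟨hQext.2.1 hb, fun h => hyS2 (mem_singleton_iff.mp h ▸ hb)⟩,
        hQext.2.2⟩⟩
    have Rsh : resInterShift T1 T2 S1 φ S2 ψ SQ1 φQ (SQ2 \ {y}) ψQ ≤ d :=
      le_trans (max_le_max le_rfl (sSup_le_sSup (image_mono diff_subset))) hQsh
    have hsame := hmin _ _ _ _ ⟨Rpi, Rext, Rsh, hRd⟩
      ⟨⟨subset_rfl, fun a _ => T2.le_refl _⟩, ⟨diff_subset, fun a _ => T1.le_refl _⟩⟩
    have hmem : y ∈ SQ2 \ {y} := hsame.2.1 ▸ hyQ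
    exact hmem.2 rfl
  have part2 := MT.shift_eq_of_min hQext hQsh hQlt huse1 hrem1
  have hQltsw : resDist T2 T1 SQ2 ψQ SQ1 φQ < d := by
    rw [MT.resDist_swap]; exact hQlt
  have part3 := MT.shift_eq_of_min hextsw hshsw hQltsw huse2 hrem2
  exact ⟨⟨⟨hQext.1.1, huse1⟩, ⟨hQext.2.1, huse2⟩⟩, part2, part3⟩
end
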